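/- If ξ is a positive differentiable solution of ξ' = 12 - 36α'/ξ with ξ ≠ 3α', and A(ξ) = A₀ (ξ/ξ₀)^{1/9} ((ξ/3 - α')/(ξ₀/3 - α'))^{-4/9}, then A(ξ(t)) satisfies A'/A = -(4/ξ)(1 + α'/ξ). -/

import Mathlib

theorem nil_A_solution (α' A₀ : ℝ) (hA₀ : 0 < A₀) (ξ : ℝ → ℝ)
    (hξpos : ∀ t, 0 < ξ t) (hξne : ∀ t, ξ t ≠ 3*α')
    (hξ0 : 0 < ξ 0)
    (hsign : ∀ t, 0 < (ξ t - 3*α') * (ξ 0 - 3*α'))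
    (hξ : ∀ t, HasDerivAt ξ (12 - 36*α'/(ξ t)) t) :
    ∀ t, HasDerivAt
      (fun s => A₀ * (ξ s / ξ 0) ^ ((1:ℝ)/9) *
        ((ξ s/3 - α')/(ξ 0/3 - α')) ^ (-(4:ℝ)/9))
      ((A₀ * (ξ t / ξ 0) ^ ((1:ℝ)/9) *
        ((ξ t/3 - α')/(ξ 0/3 - α')) ^ (-(4:ℝ)/9)) *
       (-(4/(ξ t)) * (1 + α'/(ξ t)))) t := by
  intro t
  have hx : 0 < ξ t := hξpos t
  have hx0 : ξ t ≠ 0 := ne_of_gt hx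
  have hc0 : ξ 0 ≠ 0 := ne_of_gt hξ0
  have hu : 0 < ξ t / ξ 0 := div_pos hx hξ0
  have hst := hsign t
  have hv : 0 < (ξ t/3 - α')/(ξ 0/3 - α') := by
    rcases mul_pos_iff.mp hst with ⟨h1, h2⟩ | ⟨h1, h2⟩
    · exact div_pos (by linarith) (by linarith)
    · exact div_pos_of_neg_of_neg (by linarith) (by linarith)
  have hd0 : ξ 0/3 - α' ≠ 0 := by
    intro h
    rcases mul_pos_iff.mp hst with ⟨h1, h2⟩ | ⟨h1, h2⟩ <;> linarith
  have hn0 : ξ t/3 - α' ≠ 0 := by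
    intro h
    rcases mul_pos_iff.mp hst with ⟨h1, h2⟩ | ⟨h1, h2⟩ <;> linarith
  have h1 : HasDerivAt (fun s => (ξ s / ξ 0) ^ ((1:ℝ)/9))
      ((12 - 36*α'/(ξ t)) / ξ 0 * ((1:ℝ)/9) * (ξ t / ξ 0) ^ ((1:ℝ)/9 - 1)) t :=
    ((hξ t).div_const (ξ 0)).rpow_const (Or.inl (ne_of_gt hu))
  have h2 : HasDerivAt (fun s => ((ξ s/3 - α')/(ξ 0/3 - α')) ^ (-(4:ℝ)/9))
      ((12 - 36*α'/(ξ t)) / 3 / (ξ 0/3 - α') * (-(4:ℝ)/9) *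
        ((ξ t/3 - α')/(ξ 0/3 - α')) ^ (-(4:ℝ)/9 - 1)) t :=
    ((((hξ t).div_const 3).sub_const α').div_const (ξ 0/3 - α')).rpow_const
      (Or.inl (ne_of_gt hv))
  have h := (h1.const_mul A₀).mul h2
  convert h using 1
  case e'_4 => rfl
  case e'_5 => rfl
  case e'_8 => rfl
  have e1 : (ξ t / ξ 0) ^ ((1:ℝ)/9 - 1) = (ξ t / ξ 0) ^ ((1:ℝ)/9) / (ξ t / ξ 0) := by
    rw [Real.rpow_sub hu, Real.rpow_one]
  have e2 : ((ξ t/3 - α')/(ξ 0/3 - α')) ^ (-(4:ℝ)/9 - 1)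
      = ((ξ t/3 - α')/(ξ 0/3 - α')) ^ (-(4:ℝ)/9) / ((ξ t/3 - α')/(ξ 0/3 - α')) := by
    rw [Real.rpow_sub hv, Real.rpow_one]
  have hn0' : ξ t - 3*α' ≠ 0 := sub_ne_zero.mpr (hξne t)
  have hd0' : ξ 0 - 3*α' ≠ 0 := by
    intro h
    rw [h, mul_zero] at hst
    exact lt_irrefl 0 hst
  rw [e1, e2]
  set P := (ξ t / ξ 0) ^ ((1:ℝ)/9) with hP
  set Q := ((ξ t/3 - α')/(ξ 0/3 - α')) ^ (-(4:ℝ)/9) with hQ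
  have hn1 : ξ t - α' * 3 ≠ 0 := by rwa [mul_comm] at hn0'
  have hd1 : ξ 0 - α' * 3 ≠ 0 := by rwa [mul_comm] at hd0'
  field_simp
  ring
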